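/- Let θ* := (ρ + Γ/K)/f, A := 1/θ* and B := (Γ − fθ* + fθ* ln θ*)/(θ*ρ). Define w(x) := A ln⟨e,x⟩ + B for x ∈ ℝⁿ₊ \ {0}. Then w is continuously differentiable on ℝⁿ₊ \ {0} with ∂w/∂x_j(x) = A/⟨e,x⟩ > 0 for every j, and for every x ∈ ℝⁿ₊ \ {0}: ρ w(x) = −∑_{i∈F} ln(∂w/∂x_i(x)) − f + ⟨∇w(x), (D+Bᵀ)x⟩ + Γ(1 − ln⟨e,x⟩/K) ⟨∇w(x), x⟩. Moreover, for each i ∈ F, the supremum over c > 0 of ln c − c·∂w/∂x_i(x) equals −ln(∂w/∂x_i(x)) − 1 and is attained uniquely at c = θ*⟨e,x⟩. -/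

import Mathlib

open Matrix Finset Real

/-- The diagonal matrix of outflows: `D i i = -∑_{j ≠ i} B i j`. -/
noncomputable def Dmat {n : ℕ} (B : Matrix (Fin n) (Fin n) ℝ) : Matrix (Fin n) (Fin n) ℝ :=
  Matrix.diagonal fun i => -∑ j ∈ Finset.univ.erase i, B i j

/-- The continuous linear functional `y ↦ ∑ j, p j * y j` on `ℝⁿ`. -/
noncomputable def dotCLM {n : ℕ} (p : Fin n → ℝ) : (Fin n → ℝ) →L[ℝ] ℝ :=
  LinearMap.toContinuousLinearMap
    { toFun := fun y => ∑ j, p j * y j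
      map_add' := fun y z => by
        simp [Pi.add_apply, mul_add, Finset.sum_add_distrib]
      map_smul' := fun a y => by
        simp only [Pi.smul_apply, smul_eq_mul, RingHom.id_apply, Finset.mul_sum]
        exact Finset.sum_congr rfl fun j _ => by ring }

/-- Verification of the social planner's HJB equation in the log framework (S3)(U2):
with `θ* = (ρ + Γ/K)/f`, `A = 1/θ*`, `B = (Γ − fθ* + fθ* ln θ*)/(θ*ρ)`, the function
`w(x) = A ln⟨e,x⟩ + B` is differentiable on `ℝⁿ₊ \ {0}` with `∂w/∂x_j(x) = A/⟨e,x⟩ > 0`,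
satisfies the planner's HJB equation, and for each `i ∈ F` the Hamiltonian supremum is
attained uniquely at `c = θ*⟨e,x⟩`. -/
theorem stmt16 {n : ℕ} (B : Matrix (Fin n) (Fin n) ℝ)
    (hB : ∀ i j, 0 ≤ B i j) (hdiag : ∀ i, B i i = 0)
    (F : Finset (Fin n)) (hF : F.Nonempty)
    (Γ K ρ : ℝ) (hΓ : 0 < Γ) (hK : 0 < K) (hρ : 0 < ρ)
    (θstar A Bc : ℝ)
    (hθstar : θstar = (ρ + Γ / K) / F.card)
    (hA : A = 1 / θstar)
    (hBc : Bc = (Γ - F.card * θstar + F.card * θstar * Real.log θstar) / (θstar * ρ))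
    (w : (Fin n → ℝ) → ℝ)
    (hw : ∀ x : Fin n → ℝ, w x = A * Real.log (∑ j, x j) + Bc) :
    ∀ x : Fin n → ℝ, (∀ j, 0 ≤ x j) → x ≠ 0 →
      (0 < A / (∑ j, x j)) ∧
      HasFDerivAt w (dotCLM fun _ => A / (∑ j, x j)) x ∧
      (ρ * w x = -(∑ _i ∈ F, Real.log (A / (∑ j, x j))) - F.card
        + (∑ j, (A / (∑ j, x j)) * (((Dmat B + B)ᵀ *ᵥ x) j))
        + Γ * (1 - Real.log (∑ j, x j) / K) * (∑ j, (A / (∑ j, x j)) * x j)) ∧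
      (∀ i ∈ F,
        IsGreatest ((fun c => Real.log c - c * (A / (∑ j, x j))) '' Set.Ioi (0 : ℝ))
          (-Real.log (A / (∑ j, x j)) - 1) ∧
        ∀ c : ℝ, 0 < c →
          Real.log c - c * (A / (∑ j, x j)) = -Real.log (A / (∑ j, x j)) - 1 →
          c = θstar * (∑ j, x j)) := by
  intro x hx hx0
  have hSpos : 0 < ∑ j, x j := by
    obtain ⟨i, hi⟩ : ∃ i, x i ≠ 0 := by
      by_contra h; push_neg at h; exact hx0 (funext h)
    exact Finset.sum_pos' (fun j _ => hx j)
      ⟨i, Finset.mem_univ i, lt_of_le_of_ne (hx i) (Ne.symm hi)⟩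
  set S := ∑ j, x j with hS
  have hfpos : (0:ℝ) < F.card := by exact_mod_cast Finset.card_pos.mpr hF
  have hθ : 0 < θstar := by rw [hθstar]; positivity
  have hApos : 0 < A := by rw [hA]; positivity
  have hm : 0 < A / S := div_pos hApos hSpos
  refine ⟨hm, ?_, ?_, ?_⟩
  · -- derivative
    have h1 : HasFDerivAt (fun y : Fin n → ℝ => ∑ j, y j)
        (dotCLM fun _ : Fin n => (1:ℝ)) x := by
      have := (dotCLM fun _ : Fin n => (1:ℝ)).hasFDerivAt (x := x)
      have hco : ⇑(dotCLM fun _ : Fin n => (1:ℝ)) = fun y : Fin n → ℝ => ∑ j, y j := by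
        funext y; simp [dotCLM]
      rwa [hco] at this
    have h2 : HasFDerivAt (fun y : Fin n → ℝ => Real.log (∑ j, y j))
        (S⁻¹ • dotCLM fun _ : Fin n => (1:ℝ)) x :=
      HasDerivAt.comp_hasFDerivAt (f := fun y : Fin n → ℝ => ∑ j, y j) (h₂ := Real.log) x
        (Real.hasDerivAt_log hSpos.ne') h1
    have h3 := (h2.const_mul A).add_const Bc
    have hwfun : w = fun y : Fin n → ℝ => A * Real.log (∑ j, y j) + Bc := funext hw
    rw [hwfun]
    refine h3.congr_fderiv ?_
    refine ContinuousLinearMap.ext fun y => ?_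
    simp [dotCLM, Finset.mul_sum, div_eq_mul_inv]
    exact Finset.sum_congr rfl fun j _ => by ring
  · -- HJB equation
    have hdrift : (∑ j, (A / S) * (((Dmat B + B)ᵀ *ᵥ x) j)) = 0 := by
      rw [← Finset.mul_sum]
      have hsum : ∑ j, ((Dmat B + B)ᵀ *ᵥ x) j = 0 := by
        have hcomm : ∑ j, ((Dmat B + B)ᵀ *ᵥ x) j
            = ∑ k, (∑ j, (Dmat B + B) k j) * x k := by
          simp only [Matrix.mulVec, Matrix.transpose_apply, dotProduct]
          rw [Finset.sum_comm]
          exact Finset.sum_congr rfl fun k _ => by rw [Finset.sum_mul]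
        rw [hcomm]
        refine Finset.sum_eq_zero fun k _ => ?_
        have hrow : ∑ j, (Dmat B + B) k j = 0 := by
          simp only [Matrix.add_apply, Finset.sum_add_distrib, Dmat]
          have hd : ∑ j, Matrix.diagonal (fun i => -∑ j ∈ Finset.univ.erase i, B i j) k j
              = -∑ j ∈ Finset.univ.erase k, B k j := by
            simp [Matrix.diagonal_apply]
          rw [hd, ← Finset.add_sum_erase Finset.univ (B k) (Finset.mem_univ k), hdiag k]
          ring
        rw [hrow, zero_mul]
      rw [hsum, mul_zero]
    rw [hdrift]
    have hsumx : ∑ j, (A / S) * x j = A := by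
      rw [← Finset.mul_sum, ← hS, div_mul_cancel₀ A hSpos.ne']
    have hsumF : (∑ _i ∈ F, Real.log (A / S)) = (F.card : ℝ) * Real.log (A / S) := by
      simp [Finset.sum_const, nsmul_eq_mul]
    have hlogA : Real.log A = -Real.log θstar := by
      rw [hA, one_div, Real.log_inv]
    rw [hw x, hsumx, hsumF, Real.log_div hApos.ne' hSpos.ne', hlogA, ← hS]
    have hAθ : A * θstar = 1 := by rw [hA]; field_simp
    have hθf : θstar * F.card = ρ + Γ / K := by
      rw [hθstar]; field_simp
    have hρA : ρ * A = (F.card : ℝ) - Γ * A / K := by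
      linear_combination (F.card : ℝ) * hAθ - A * hθf
    have hρBc : ρ * Bc = Γ * A - (F.card : ℝ) + (F.card : ℝ) * Real.log θstar := by
      rw [hBc]
      field_simp
      linear_combination (-Γ) * hAθ
    linear_combination Real.log S * hρA + hρBc
  · -- Hamiltonian
    intro i hi
    set m := A / S with hmdef
    constructor
    · constructor
      · refine ⟨1 / m, one_div_pos.mpr hm, ?_⟩
        show Real.log (1 / m) - (1 / m) * m = -Real.log m - 1
        rw [one_div, Real.log_inv, inv_mul_cancel₀ hm.ne']
      · rintro y ⟨c, hc, rfl⟩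
        simp only [Set.mem_Ioi] at hc
        have h1 : Real.log (c * m) ≤ c * m - 1 :=
          Real.log_le_sub_one_of_pos (mul_pos hc hm)
        rw [Real.log_mul hc.ne' hm.ne'] at h1
        show Real.log c - c * m ≤ -Real.log m - 1
        linarith
    · intro c hc heq
      have hcm : c * m = 1 := by
        by_contra hne
        have hlt := Real.log_lt_sub_one_of_pos (mul_pos hc hm) hne
        rw [Real.log_mul hc.ne' hm.ne'] at hlt
        linarith
      have hc1 : c = 1 / m := by
        field_simp
        linarith [hcm]
      rw [hc1, hmdef, hA]
      field_simp
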